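/- Fix x ∈ ℝ^m and C > 0, and define d : ℝ^m × {0,1} → ℝ by d(θ, y) = ‖θ‖₂² − C⟨x, θ⟩y. Then the tightest convex extension of d to ℝ^m × [0,1] is d**(θ, y) = ‖θ − y(C/2)x‖₂² − y‖(C/2)x‖₂². -/

import Mathlib

open Set

/-- closed form of the tightest convex extension of
`d(θ,y) = ‖θ‖² − C⟨x,θ⟩y`. -/
theorem instructive_example_tightest
    (m : ℕ) (x : EuclideanSpace ℝ (Fin m)) (C : ℝ) (hC : 0 < C)
    (d : EuclideanSpace ℝ (Fin m) → ℝ → ℝ)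
    (hd : ∀ θ y, d θ y = ‖θ‖ ^ 2 - C * (inner ℝ x θ : ℝ) * y)
    (dstar : EuclideanSpace ℝ (Fin m) → ℝ → ℝ)
    (hdstar : ∀ θ y, dstar θ y = ‖θ - y • ((C / 2) • x)‖ ^ 2 - y * ‖(C / 2) • x‖ ^ 2) :
    ConvexOn ℝ (univ ×ˢ Icc (0:ℝ) 1) (fun p => dstar p.1 p.2) ∧
    (∀ θ, dstar θ 0 = d θ 0) ∧ (∀ θ, dstar θ 1 = d θ 1) ∧
    (∀ g : EuclideanSpace ℝ (Fin m) × ℝ → ℝ,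
      ConvexOn ℝ (univ ×ˢ Icc (0:ℝ) 1) g →
      (∀ θ, g (θ, 0) = d θ 0) → (∀ θ, g (θ, 1) = d θ 1) →
      ∀ θ, ∀ y ∈ Icc (0:ℝ) 1, g (θ, y) ≤ dstar θ y) := by
  set a : EuclideanSpace ℝ (Fin m) := (C / 2) • x with ha
  refine ⟨?_, ?_, ?_, ?_⟩
  · -- convexity
    refine ⟨convex_univ.prod (convex_Icc 0 1), ?_⟩
    rintro p - q - lam mu hl hm hlm
    simp only [hdstar]
    set u := p.1 - p.2 • a with hu
    set v := q.1 - q.2 • a with hv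
    have key : (lam • p + mu • q).1 - (lam • p + mu • q).2 • a = lam • u + mu • v := by
      simp only [hu, hv, Prod.fst_add, Prod.snd_add, Prod.smul_fst, Prod.smul_snd,
        smul_sub, smul_smul, add_smul, smul_eq_mul]
      module
    rw [key]
    have h1 : ‖lam • u + mu • v‖ ^ 2
        = ‖lam • u‖ ^ 2 + 2 * (inner ℝ (lam • u) (mu • v) : ℝ) + ‖mu • v‖ ^ 2 :=
      norm_add_sq_real _ _
    have h2 : (inner ℝ (lam • u) (mu • v) : ℝ) = lam * mu * inner ℝ u v := by
      rw [real_inner_smul_left, real_inner_smul_right]; ring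
    have h3 : (inner ℝ u v : ℝ) ≤ ‖u‖ * ‖v‖ := real_inner_le_norm u v
    have h4 : ‖lam • u‖ = lam * ‖u‖ := by rw [norm_smul, Real.norm_of_nonneg hl]
    have h5 : ‖mu • v‖ = mu * ‖v‖ := by rw [norm_smul, Real.norm_of_nonneg hm]
    have h6 : 0 ≤ ‖u‖ := norm_nonneg _
    have h7 : 0 ≤ ‖v‖ := norm_nonneg _
    have h8 : (lam • p + mu • q).2 = lam * p.2 + mu * q.2 := by
      simp [Prod.snd_add, Prod.smul_snd]
    rw [h1, h2, h4, h5, h8]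
    simp only [smul_eq_mul, ← hu, ← hv]
    nlinarith [sq_nonneg (‖u‖ - ‖v‖), mul_nonneg hl hm]
  · -- y = 0
    intro θ
    rw [hdstar, hd]
    simp
  · -- y = 1
    intro θ
    rw [hdstar, hd]
    have h1 : ‖θ - (1:ℝ) • a‖ ^ 2 = ‖θ‖ ^ 2 - 2 * (inner ℝ θ a : ℝ) + ‖a‖ ^ 2 := by
      rw [one_smul]; exact norm_sub_sq_real θ a
    have h2 : (inner ℝ θ a : ℝ) = (C / 2) * inner ℝ x θ := by
      rw [ha, real_inner_smul_right, real_inner_comm]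
    rw [h1, h2]; ring
  · -- maximality
    intro g hg g0 g1 θ y hy
    set θ₀ : EuclideanSpace ℝ (Fin m) := θ - y • a with hθ₀
    have hP : ((θ₀, (0:ℝ)) : EuclideanSpace ℝ (Fin m) × ℝ) ∈ univ ×ˢ Icc (0:ℝ) 1 := by
      simp [mem_prod]
    have hQ : ((θ₀ + a, (1:ℝ)) : EuclideanSpace ℝ (Fin m) × ℝ) ∈ univ ×ˢ Icc (0:ℝ) 1 := by
      simp [mem_prod]
    have h1y : (0:ℝ) ≤ 1 - y := by linarith [hy.2]
    have hsum : (1 - y) + y = 1 := by ring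
    have hcomb : (1 - y) • ((θ₀, (0:ℝ)) : EuclideanSpace ℝ (Fin m) × ℝ)
        + y • ((θ₀ + a, (1:ℝ)) : EuclideanSpace ℝ (Fin m) × ℝ) = (θ, y) := by
      refine Prod.ext ?_ ?_
      · show (1 - y) • θ₀ + y • (θ₀ + a) = θ
        rw [hθ₀]; module
      · show (1 - y) * 0 + y * 1 = y
        ring
    have hle := hg.2 hP hQ h1y hy.1 hsum
    rw [hcomb] at hle
    refine hle.trans_eq ?_
    rw [g0, g1, hd, hd, hdstar]
    have hna : ‖θ₀ + a‖ ^ 2 = ‖θ₀‖ ^ 2 + 2 * (inner ℝ θ₀ a : ℝ) + ‖a‖ ^ 2 :=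
      norm_add_sq_real θ₀ a
    have hia : (inner ℝ θ₀ a : ℝ) = (C / 2) * inner ℝ x θ₀ := by
      rw [ha, real_inner_smul_right, real_inner_comm]
    have hix : (inner ℝ x (θ₀ + a) : ℝ) = inner ℝ x θ₀ + (C / 2) * ‖x‖ ^ 2 := by
      rw [inner_add_right, ha, real_inner_smul_right, real_inner_self_eq_norm_sq]
    have hnA : ‖a‖ ^ 2 = (C / 2) ^ 2 * ‖x‖ ^ 2 := by
      rw [ha, norm_smul, mul_pow, Real.norm_eq_abs, sq_abs]
    rw [hna, hix, hnA, hia, ← hθ₀]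
    simp only [smul_eq_mul]
    ring
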